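/- There exists a constant C_d depending only on d with the following property. Let V, t > 0 and let f : [0,1]^d → ℝ be of the form f(x) = β_∅ + Σ_{S⊆[d],1≤|S|≤s} β_S Π_{j∈S} x_j − Σ_{S⊆[d],1≤|S|≤s} ∫_{[0,1)^{|S|}∖{0}} Π_{j∈S}(x_j − t_j)_+ dν_S(t_j, j∈S), where the ν_S are finite Borel measures with Σ_{S:1≤|S|≤s} ν_S([0,1)^{|S|}∖{0}) ≤ V, and suppose ‖f‖_2 ≤ t with ‖f‖_2 the L² norm on [0,1]^d. Then for every subset T ⊆ [d] with |T| ≤ s (including T = ∅), the coefficient satisfies |β_T| ≤ C_d (V + t). -/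

import Mathlib

open MeasureTheory ProbabilityTheory

noncomputable section

/-- The unit cube `[0,1]^ι` inside `ι → ℝ`. -/
def unitCube (ι : Type*) : Set (ι → ℝ) := Set.univ.pi fun _ => Set.Icc (0 : ℝ) 1

/-- The (tensor-product) divided difference of `f` of order `p` at the points `x`. -/
def mvDivDiff {ι : Type*} [Fintype ι] [DecidableEq ι] (f : (ι → ℝ) → ℝ) (p : ι → ℕ)
    (x : (k : ι) → Fin (p k + 1) → ℝ) : ℝ :=
  ∑ i : (k : ι) → Fin (p k + 1),
    f (fun k => x k (i k)) /
      ∏ k, ∏ j ∈ Finset.univ.erase (i k), (x k (i k) - x k j)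

/-- `F^d_TCP`: total concavity in the sense of Popoviciu, i.e. all divided differences
of order `p ∈ {0,1,2}^d` with `max_k p_k = 2` are nonpositive. -/
def MemTCP (d : ℕ) (f : (Fin d → ℝ) → ℝ) : Prop :=
  ∀ p : Fin d → ℕ, (∀ k, p k ≤ 2) → (∃ k, p k = 2) →
    ∀ x : (k : Fin d) → Fin (p k + 1) → ℝ,
      (∀ k, StrictMono (x k)) → (∀ k j, x k j ∈ Set.Icc (0 : ℝ) 1) →
      mvDivDiff f p x ≤ 0

/-- The collection of subsets `S ⊆ [d]` with `1 ≤ |S| ≤ s`. -/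
def smallSets (d s : ℕ) : Finset (Finset (Fin d)) :=
  Finset.univ.filter fun S => 1 ≤ S.card ∧ S.card ≤ s

/-- The set `[0,1)^{|S|} \ {0}`, viewed inside `Fin d → ℝ` (coordinates in `S`). -/
def tcSupport (d : ℕ) (S : Finset (Fin d)) : Set (Fin d → ℝ) :=
  {t | (∀ j ∈ S, t j ∈ Set.Ico (0 : ℝ) 1) ∧ ∃ j ∈ S, t j ≠ 0}

/-- A representation `(β₀, (β_S), (ν_S))` of a totally concave function:
a constant, coefficients for the multilinear terms, and finite Borel measures
`ν_S` on `[0,1)^{|S|} \ {0}`. -/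
structure TCRep (d : ℕ) where
  β0 : ℝ
  β : Finset (Fin d) → ℝ
  ν : Finset (Fin d) → Measure (Fin d → ℝ)
  finite : ∀ S, IsFiniteMeasure (ν S)
  support : ∀ S, ν S (tcSupport d S)ᶜ = 0

/-- The function represented by `r`, keeping interactions of order at most `s`. -/
def TCRep.toFun {d : ℕ} (s : ℕ) (r : TCRep d) (x : Fin d → ℝ) : ℝ :=
  r.β0 + ∑ S ∈ smallSets d s, r.β S * ∏ j ∈ S, x j
    - ∑ S ∈ smallSets d s, ∫ t, (∏ j ∈ S, max (x j - t j) 0) ∂(r.ν S)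

/-- The total size `V` of the measures in the representation `r`. -/
def TCRep.V {d : ℕ} (s : ℕ) (r : TCRep d) : ℝ :=
  ∑ S ∈ smallSets d s, (r.ν S Set.univ).toReal

/-- Membership in the class `F^{d,s}_TC` of totally concave functions on `[0,1]^d`
with interactions of order at most `s`. -/
def MemTC (d s : ℕ) (f : (Fin d → ℝ) → ℝ) : Prop :=
  ∃ r : TCRep d, ∀ x ∈ unitCube (Fin d), f x = r.toFun s x

/-- Membership in `F^{d,s}_TC` via a representation of total measure size at most `Vbd`. -/
def MemTCV (d s : ℕ) (Vbd : ℝ) (f : (Fin d → ℝ) → ℝ) : Prop :=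
  ∃ r : TCRep d, (∀ x ∈ unitCube (Fin d), f x = r.toFun s x) ∧ r.V s ≤ Vbd

/-- The interaction restriction condition of order `s`. -/
def InteractionRestriction (d s : ℕ) (f : (Fin d → ℝ) → ℝ) : Prop :=
  ∀ S : Finset (Fin d), s < S.card →
    ∀ x y : Fin d → ℝ, (∀ k ∈ S, 0 ≤ x k ∧ x k < y k ∧ y k ≤ 1) →
      ∑ R ∈ S.powerset, (-1 : ℝ) ^ (S.card - R.card) *
        f (fun k => if k ∈ R then y k else if k ∈ S then x k else 0) = 0

/-- The regularity condition at `0` for the subset `S`: the relevant divided differences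
near the origin are bounded above. -/
def RegZero (d : ℕ) (f : (Fin d → ℝ) → ℝ) (S : Finset (Fin d)) : Prop :=
  ∃ M : ℝ, ∀ t : Fin d → ℝ, (∀ k ∈ S, t k ∈ Set.Ioc (0 : ℝ) 1) →
    (∏ k ∈ S, t k)⁻¹ *
      ∑ R ∈ S.powerset, (-1 : ℝ) ^ (S.card - R.card) *
        f (fun k => if k ∈ R then t k else 0) ≤ M

/-- The regularity condition at `1` for the subset `S`: the relevant divided differences
near the far corner are bounded below. -/
def RegOne (d : ℕ) (f : (Fin d → ℝ) → ℝ) (S : Finset (Fin d)) : Prop :=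
  ∃ M : ℝ, ∀ t : Fin d → ℝ, (∀ k ∈ S, t k ∈ Set.Ico (0 : ℝ) 1) →
    M ≤ (∏ k ∈ S, (1 - t k))⁻¹ *
      ∑ R ∈ S.powerset, (-1 : ℝ) ^ (S.card - R.card) *
        f (fun k => if k ∈ R then 1 else if k ∈ S then t k else 0)

/-- Entire monotonicity: all divided differences of order `p ∈ {0,1}^ι \ {0}`
are nonnegative. -/
def EntirelyMonotone {ι : Type*} [Fintype ι] [DecidableEq ι] (g : (ι → ℝ) → ℝ) : Prop :=
  ∀ p : ι → ℕ, (∀ k, p k ≤ 1) → (∃ k, p k = 1) →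
    ∀ x : (k : ι) → Fin (p k + 1) → ℝ,
      (∀ k, StrictMono (x k)) → (∀ k j, x k j ∈ Set.Icc (0 : ℝ) 1) →
      0 ≤ mvDivDiff g p x

/-- Coordinate-wise right-continuity on the unit cube. -/
def CwRightCont {ι : Type*} [DecidableEq ι] (g : (ι → ℝ) → ℝ) : Prop :=
  ∀ x : ι → ℝ, (∀ k, x k ∈ Set.Icc (0 : ℝ) 1) → ∀ k : ι,
    ContinuousWithinAt (fun u => g (Function.update x k u)) (Set.Icc (x k) 1) (x k)

/-- Coordinate-wise left-continuity at points of the cube whose `k`-th coordinate is `1`,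
with respect to that coordinate. -/
def CwLeftContAtOne {ι : Type*} [DecidableEq ι] (g : (ι → ℝ) → ℝ) : Prop :=
  ∀ x : ι → ℝ, (∀ k, x k ∈ Set.Icc (0 : ℝ) 1) → ∀ k : ι, x k = 1 →
    ContinuousWithinAt (fun u => g (Function.update x k u)) (Set.Icc (0 : ℝ) 1) (x k)

/-- `t` belongs to the lattice `L_S` generated by the design points `x`
(extended by `0` in the coordinates outside `S`). -/
def InLattice {d n : ℕ} (x : Fin n → Fin d → ℝ) (S : Finset (Fin d)) (t : Fin d → ℝ) : Prop :=
  (∀ j ∈ S, t j = 0 ∨ ∃ i, t j = x i j) ∧ (∃ j ∈ S, t j ≠ 0) ∧ ∀ j ∉ S, t j = 0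

/-- The finite-dimensional class of functions built from hinge functions with knots in the
lattices `L_S` (nonnegative coefficients on the hinge terms). -/
def MemDiscrete (d s : ℕ) {n : ℕ} (x : Fin n → Fin d → ℝ) (f : (Fin d → ℝ) → ℝ) : Prop :=
  ∃ (β0 : ℝ) (β : Finset (Fin d) → ℝ)
    (T : Finset (Fin d) → Finset (Fin d → ℝ)) (c : Finset (Fin d) → (Fin d → ℝ) → ℝ),
    (∀ S ∈ smallSets d s, ∀ t ∈ T S, InLattice x S t) ∧
    (∀ S ∈ smallSets d s, ∀ t ∈ T S, 0 ≤ c S t) ∧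
    ∀ z ∈ unitCube (Fin d),
      f z = β0 + ∑ S ∈ smallSets d s, β S * ∏ j ∈ S, z j
        - ∑ S ∈ smallSets d s, ∑ t ∈ T S, c S t * ∏ j ∈ S, max (z j - t j) 0

/-- The point of the equally spaced lattice design indexed by `i`. -/
def latticePoint {d : ℕ} (nk : Fin d → ℕ) (i : ∀ k, Fin (nk k)) : Fin d → ℝ :=
  fun k => (i k : ℝ) / (nk k)

/-- `V_design(f)`: the infimum of `V(g)` over all totally concave `g` agreeing with `f`
at the design points. -/
def Vdesign (d : ℕ) {ι : Type*} (pts : ι → Fin d → ℝ) (f : (Fin d → ℝ) → ℝ) : ℝ :=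
  sInf {v : ℝ | ∃ r : TCRep d, (∀ i, r.toFun d (pts i) = f (pts i)) ∧ v = r.V d}

/-- `f` is a continuous rectangular piecewise multi-affine function (interaction order `≤ s`)
with respect to an axis-aligned grid partition of `[0,1]^d` into `m` rectangles. -/
def IsRectPartition (d s : ℕ) (f : (Fin d → ℝ) → ℝ) (m : ℕ) : Prop :=
  ContinuousOn f (unitCube (Fin d)) ∧
  ∃ (mk : Fin d → ℕ) (u : (k : Fin d) → Fin (mk k + 1) → ℝ),
    (∀ k, StrictMono (u k)) ∧ (∀ k, u k 0 = 0) ∧ (∀ k, u k (Fin.last (mk k)) = 1) ∧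
    m = ∏ k, mk k ∧
    ∀ j : (k : Fin d) → Fin (mk k),
      ∃ (c0 : ℝ) (c : Finset (Fin d) → ℝ),
        ∀ x : Fin d → ℝ,
          (∀ k, x k ∈ Set.Icc (u k (j k).castSucc) (u k (j k).succ)) →
          f x = c0 + ∑ S ∈ smallSets d s, c S * ∏ k ∈ S, x k



section AuxCoeff

open MeasureTheory

lemma unitCube_measurableSet {d : ℕ} : MeasurableSet (unitCube (Fin d)) :=
  MeasurableSet.univ_pi (fun _ => measurableSet_Icc)

lemma unitCube_compact {d : ℕ} : IsCompact (unitCube (Fin d)) :=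
  isCompact_univ_pi (fun _ => isCompact_Icc)

lemma unitCube_volume {d : ℕ} : (volume (unitCube (Fin d))) = 1 := by
  rw [unitCube, volume_pi_pi]
  simp [Real.volume_Icc]

lemma lin_integral (a b : ℝ) : ∫ u in Set.Icc (0:ℝ) 1, (a*u+b) = a/2 + b := by
  rw [MeasureTheory.integral_Icc_eq_integral_Ioc, ← intervalIntegral.integral_of_le zero_le_one]
  rw [intervalIntegral.integral_add (intervalIntegral.intervalIntegrable_id.const_mul a)
    intervalIntegrable_const, intervalIntegral.integral_const_mul, integral_id,
    intervalIntegral.integral_const]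
  norm_num; ring

lemma lin_integral2 (a b : ℝ) : ∫ u in Set.Icc (0:ℝ) 1, u*(a*u+b) = a/3 + b/2 := by
  rw [MeasureTheory.integral_Icc_eq_integral_Ioc, ← intervalIntegral.integral_of_le zero_le_one]
  have h : ∀ u:ℝ, u*(a*u+b) = a*u^2 + b*u := by intro u; ring
  simp_rw [h]
  rw [intervalIntegral.integral_add ((intervalIntegral.intervalIntegrable_pow 2).const_mul a)
    (intervalIntegral.intervalIntegrable_id.const_mul b), intervalIntegral.integral_const_mul,
    intervalIntegral.integral_const_mul, integral_pow, integral_id]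
  norm_num; ring

lemma cube_prod_integral {d : ℕ} (g : Fin d → ℝ → ℝ) :
    ∫ z in unitCube (Fin d), ∏ k, g k (z k) = ∏ k, ∫ u in Set.Icc (0:ℝ) 1, g k u := by
  rw [← integral_indicator unitCube_measurableSet]
  have key : ∀ z : Fin d → ℝ, (unitCube (Fin d)).indicator (fun z => ∏ k, g k (z k)) z
      = ∏ k, (Set.Icc (0:ℝ) 1).indicator (g k) (z k) := by
    intro z
    by_cases hz : z ∈ unitCube (Fin d)
    · rw [Set.indicator_of_mem hz]
      exact Finset.prod_congr rfl fun k _ =>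
        (Set.indicator_of_mem (hz k (Set.mem_univ k)) _).symm
    · rw [Set.indicator_of_notMem hz]
      obtain ⟨k, hk⟩ : ∃ k, z k ∉ Set.Icc (0:ℝ) 1 := by
        by_contra h; push_neg at h; exact hz fun k _ => h k
      exact (Finset.prod_eq_zero (Finset.mem_univ k)
        (Set.indicator_of_notMem hk _)).symm
  rw [show ((unitCube (Fin d)).indicator fun z => ∏ k, g k (z k))
      = fun z => ∏ k, (Set.Icc (0:ℝ) 1).indicator (g k) (z k) from funext key]
  rw [MeasureTheory.integral_fintype_prod_volume_eq_prod
    (fun k => (Set.Icc (0:ℝ) 1).indicator (g k))]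
  exact Finset.prod_congr rfl fun k _ => integral_indicator measurableSet_Icc

/-- Orthogonality: integrating a square-free monomial against the test product. -/
lemma coeff_integral {d : ℕ} (S T : Finset (Fin d)) :
    ∫ z in unitCube (Fin d),
        (∏ j ∈ S, z j) * ∏ k, (if k ∈ T then 12 * z k - 6 else 4 - 6 * z k)
      = if S = T then 1 else 0 := by
  have hfun : (fun z : Fin d → ℝ =>
      (∏ j ∈ S, z j) * ∏ k, (if k ∈ T then 12 * z k - 6 else 4 - 6 * z k))
      = fun z => ∏ k, ((if k ∈ S then z k else 1) *
          (if k ∈ T then 12 * z k - 6 else 4 - 6 * z k)) := by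
    funext z
    rw [Finset.prod_mul_distrib, Finset.prod_ite_mem Finset.univ S (fun k => z k),
      Finset.univ_inter]
  rw [hfun, cube_prod_integral (fun k u =>
    (if k ∈ S then u else 1) * (if k ∈ T then 12 * u - 6 else 4 - 6 * u))]
  have hfac : ∀ k : Fin d, (∫ u in Set.Icc (0:ℝ) 1,
      (if k ∈ S then u else 1) * (if k ∈ T then 12 * u - 6 else 4 - 6 * u))
      = if ((k ∈ S) = (k ∈ T)) then 1 else 0 := by
    intro k
    have e1 : ∀ u : ℝ, 12 * u - 6 = 12 * u + (-6) := fun u => by ring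
    have e2 : ∀ u : ℝ, 4 - 6 * u = (-6) * u + 4 := fun u => by ring
    by_cases hS : k ∈ S <;> by_cases hT : k ∈ T
    · simp only [hS, hT, if_true]
      simp_rw [e1]; rw [lin_integral2]; norm_num
    · simp only [hS, hT, if_true, if_false]
      simp_rw [e2]; rw [lin_integral2]; norm_num
    · simp only [hS, hT, if_true, if_false, one_mul]
      simp_rw [e1]; rw [lin_integral]; norm_num
    · simp only [hS, hT, if_false, one_mul]
      simp_rw [e2]; rw [lin_integral]; norm_num
  rw [Finset.prod_congr rfl fun k _ => hfac k]
  by_cases hST : S = T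
  · subst hST; simp
  · rw [if_neg hST]
    obtain ⟨k, hk⟩ : ∃ k, ¬((k ∈ S) ↔ (k ∈ T)) := by
      by_contra h; push_neg at h; exact hST (Finset.ext_iff.2 h)
    exact Finset.prod_eq_zero (Finset.mem_univ k)
      (if_neg (by rwa [eq_iff_iff]))

end AuxCoeff

/-- **Lemma (bound on the multilinear coefficients).**
There is a constant `C_d` depending only on `d` such that for any representation of a
function in `F^{d,s}_TC` with total measure size at most `V` and `L²` norm on the cube
at most `t`, every coefficient `β_T` (including `β_∅ = β₀`) satisfies
`|β_T| ≤ C_d (V + t)`. -/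
theorem tc_coefficient_bound (d : ℕ) :
    ∃ C : ℝ, 0 < C ∧
      ∀ s : ℕ, 1 ≤ s → s ≤ d →
      ∀ V t : ℝ, 0 < V → 0 < t →
      ∀ r : TCRep d, r.V s ≤ V →
        (∫ z in unitCube (Fin d), r.toFun s z ^ 2) ≤ t ^ 2 →
        |r.β0| ≤ C * (V + t) ∧
        ∀ T : Finset (Fin d), 1 ≤ T.card → T.card ≤ s → |r.β T| ≤ C * (V + t) := by
  classical
  refine ⟨6 ^ d, by positivity, ?_⟩
  intro s hs1 hsd V t hV ht r hrV hL2
  set cube := unitCube (Fin d) with hcube_def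
  have hcubem : MeasurableSet cube := unitCube_measurableSet
  have hcubec : IsCompact cube := unitCube_compact
  have hvol : volume cube = 1 := unitCube_volume
  haveI : IsFiniteMeasure (volume.restrict cube) :=
    ⟨by rw [Measure.restrict_apply_univ, hvol]; exact ENNReal.one_lt_top⟩
  set h : (Fin d → ℝ) → ℝ :=
    fun z => ∑ S ∈ smallSets d s, ∫ t', (∏ j ∈ S, max (z j - t' j) 0) ∂(r.ν S) with hh_def
  set poly : (Fin d → ℝ) → ℝ :=
    fun z => r.β0 + ∑ S ∈ smallSets d s, r.β S * ∏ j ∈ S, z j with hpoly_def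
  have hfz : ∀ z, r.toFun s z = poly z - h z := fun z => rfl
  -- continuity of poly
  have hpolycont : Continuous poly := by
    apply Continuous.add continuous_const
    apply continuous_finset_sum
    intro S _
    exact (continuous_const.mul (continuous_finset_prod S fun j _ => continuous_apply j))
  -- pieces of h : measurability
  have hSmeas : ∀ S : Finset (Fin d), StronglyMeasurable
      fun z : Fin d → ℝ => ∫ t', (∏ j ∈ S, max (z j - t' j) 0) ∂(r.ν S) := by
    intro S
    haveI := r.finite S
    have hc : Continuous fun p : (Fin d → ℝ) × (Fin d → ℝ) =>
        ∏ j ∈ S, max (p.1 j - p.2 j) 0 := by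
      apply continuous_finset_prod
      intro j _
      exact (((continuous_apply j).comp continuous_fst).sub
        ((continuous_apply j).comp continuous_snd)).max continuous_const
    exact hc.stronglyMeasurable.integral_prod_right'
  have hhmeas : StronglyMeasurable h :=
    Finset.stronglyMeasurable_fun_sum _ fun S _ => hSmeas S
  -- pointwise bounds on h
  have hSnonneg : ∀ (S : Finset (Fin d)) (z : Fin d → ℝ),
      0 ≤ ∫ t', (∏ j ∈ S, max (z j - t' j) 0) ∂(r.ν S) := fun S z =>
    integral_nonneg fun t' => Finset.prod_nonneg fun j _ => le_max_right _ _
  have hSle : ∀ (S : Finset (Fin d)), ∀ z ∈ cube,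
      (∫ t', (∏ j ∈ S, max (z j - t' j) 0) ∂(r.ν S)) ≤ (r.ν S Set.univ).toReal := by
    intro S z hz
    haveI := r.finite S
    have hb : ∀ᵐ t' ∂(r.ν S), ‖∏ j ∈ S, max (z j - t' j) 0‖ ≤ 1 := by
      have h0 : ∀ᵐ t' ∂(r.ν S), t' ∈ tcSupport d S :=
        (MeasureTheory.mem_ae_iff).2 (r.support S)
      filter_upwards [h0] with t' ht'
      rw [Real.norm_eq_abs, abs_of_nonneg (Finset.prod_nonneg fun j _ => le_max_right _ _)]
      refine Finset.prod_le_one (fun j _ => le_max_right _ _) (fun j hj => ?_)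
      have h1 : (0:ℝ) ≤ t' j := (ht'.1 j hj).1
      have h2 : z j ≤ 1 := (hz j (Set.mem_univ j)).2
      exact max_le (by linarith) zero_le_one
    refine le_trans (le_abs_self _) ?_
    have := MeasureTheory.norm_integral_le_of_norm_le_const hb
    simpa [measureReal_def] using this
  have hhnonneg : ∀ z, 0 ≤ h z := fun z =>
    Finset.sum_nonneg fun S _ => hSnonneg S z
  have hhle : ∀ z ∈ cube, h z ≤ V := by
    intro z hz
    refine le_trans (Finset.sum_le_sum fun S _ => hSle S z hz) ?_
    exact hrV
  -- bound on poly on the cube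
  obtain ⟨B, hB⟩ := hcubec.exists_bound_of_continuousOn hpolycont.continuousOn
  have hfbd : ∀ z ∈ cube, |r.toFun s z| ≤ B + V := by
    intro z hz
    rw [hfz]
    calc |poly z - h z| ≤ |poly z| + |h z| := abs_sub _ _
      _ ≤ B + V := by
          refine add_le_add ?_ ?_
          · simpa using hB z hz
          · rw [abs_of_nonneg (hhnonneg z)]; exact hhle z hz
  -- integrability of f and f² on the cube
  have hfmeas : StronglyMeasurable (r.toFun s) :=
    hpolycont.stronglyMeasurable.sub hhmeas
  have hfint : Integrable (r.toFun s) (volume.restrict cube) := by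
    refine Integrable.mono' (integrable_const (B + V)) hfmeas.aestronglyMeasurable ?_
    filter_upwards [ae_restrict_mem hcubem] with z hz using hfbd z hz
  have hf2int : Integrable (fun z => r.toFun s z ^ 2) (volume.restrict cube) := by
    refine Integrable.mono' (integrable_const ((B + V) ^ 2))
      (hfmeas.pow 2).aestronglyMeasurable ?_
    filter_upwards [ae_restrict_mem hcubem] with z hz
    rw [Real.norm_eq_abs, abs_of_nonneg (sq_nonneg _), ← sq_abs]
    exact pow_le_pow_left₀ (abs_nonneg _) (hfbd z hz) 2
  -- L¹ bound on f from the L² hypothesis (AM-GM)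
  have hf2nonneg : (0:ℝ) ≤ B + V := le_trans (abs_nonneg _) (hfbd 0 (by
    intro k _; exact ⟨le_refl 0, zero_le_one⟩))
  have hfL1 : (∫ z in cube, |r.toFun s z|) ≤ t := by
    have hmono : (∫ z in cube, |r.toFun s z|)
        ≤ ∫ z in cube, (t / 2 + r.toFun s z ^ 2 / (2 * t)) := by
      refine integral_mono hfint.abs ((integrable_const _).add (hf2int.div_const _)) ?_
      intro z
      have h2t : (0:ℝ) < 2 * t := by linarith
      show |r.toFun s z| ≤ t / 2 + r.toFun s z ^ 2 / (2 * t)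
      have heq : t / 2 + r.toFun s z ^ 2 / (2 * t)
          = (t ^ 2 + r.toFun s z ^ 2) / (2 * t) := by
        field_simp
      rw [heq, le_div_iff₀ h2t]
      nlinarith [sq_nonneg (|r.toFun s z| - t), sq_abs (r.toFun s z), abs_nonneg (r.toFun s z)]
    refine le_trans hmono ?_
    rw [integral_add (integrable_const _) (hf2int.div_const _), integral_const, integral_div]
    have hμ : ((volume.restrict cube) Set.univ).toReal = 1 := by
      rw [Measure.restrict_apply_univ, hvol]; simp
    rw [measureReal_def, hμ, one_smul]
    have ht' : t ≠ 0 := ne_of_gt ht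
    have hdiv : (∫ z in cube, r.toFun s z ^ 2) / (2 * t) ≤ t ^ 2 / (2 * t) := by
      gcongr
    calc t / 2 + (∫ z in cube, r.toFun s z ^ 2) / (2 * t)
        ≤ t / 2 + t ^ 2 / (2 * t) := by linarith
      _ = t := by field_simp; ring
  -- the main coefficient bound
  have main : ∀ T : Finset (Fin d), (T = ∅ ∨ T ∈ smallSets d s) →
      |(if T = ∅ then r.β0 else r.β T)| ≤ 6 ^ d * (V + t) := by
    intro T hT
    set Φ : (Fin d → ℝ) → ℝ :=
      fun z => ∏ k, (if k ∈ T then 12 * z k - 6 else 4 - 6 * z k) with hΦ_def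
    have hΦcont : Continuous Φ := by
      apply continuous_finset_prod
      intro k _
      by_cases hk : k ∈ T <;> simp only [hk, if_true, if_false] <;> fun_prop
    have hΦbd : ∀ z ∈ cube, |Φ z| ≤ 6 ^ d := by
      intro z hz
      rw [hΦ_def]
      calc |∏ k, (if k ∈ T then 12 * z k - 6 else 4 - 6 * z k)|
          = ∏ k, |if k ∈ T then 12 * z k - 6 else 4 - 6 * z k| := Finset.abs_prod _ _
        _ ≤ ∏ _k : Fin d, (6:ℝ) := by
            refine Finset.prod_le_prod (fun k _ => abs_nonneg _) (fun k _ => ?_)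
            have h1 := (hz k (Set.mem_univ k)).1
            have h2 := (hz k (Set.mem_univ k)).2
            by_cases hk : k ∈ T <;> simp only [hk, if_true, if_false] <;>
              rw [abs_le] <;> constructor <;> linarith
        _ = 6 ^ d := by simp
    -- extraction identity for the polynomial part
    have hpolyΦ : (∫ z in cube, poly z * Φ z) = (if T = ∅ then r.β0 else r.β T) := by
      have hexp : ∀ z : Fin d → ℝ, poly z * Φ z
          = r.β0 * ((∏ j ∈ (∅ : Finset (Fin d)), z j) * Φ z)
            + ∑ S ∈ smallSets d s, r.β S * ((∏ j ∈ S, z j) * Φ z) := by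
        intro z
        rw [hpoly_def]
        simp only [Finset.prod_empty, one_mul]
        rw [add_mul, Finset.sum_mul]
        ring_nf
      simp_rw [hexp]
      have hint1 : IntegrableOn
          (fun z => r.β0 * ((∏ j ∈ (∅ : Finset (Fin d)), z j) * Φ z)) cube volume := by
        apply ContinuousOn.integrableOn_compact' hcubec hcubem
        exact (continuous_const.mul ((continuous_finset_prod _ fun j _ =>
          continuous_apply j).mul hΦcont)).continuousOn
      have hint2 : ∀ S ∈ smallSets d s, IntegrableOn
          (fun z => r.β S * ((∏ j ∈ S, z j) * Φ z)) cube volume := by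
        intro S _
        apply ContinuousOn.integrableOn_compact' hcubec hcubem
        exact (continuous_const.mul ((continuous_finset_prod _ fun j _ =>
          continuous_apply j).mul hΦcont)).continuousOn
      rw [integral_add hint1 (integrable_finset_sum _ hint2),
        integral_finset_sum _ hint2, integral_const_mul]
      have hc0 := coeff_integral (∅ : Finset (Fin d)) T
      have hcS : ∀ S ∈ smallSets d s,
          (∫ z in cube, r.β S * ((∏ j ∈ S, z j) * Φ z))
            = r.β S * (if S = T then 1 else 0) := by
        intro S _
        rw [integral_const_mul, coeff_integral S T]
      rw [hc0, Finset.sum_congr rfl hcS]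
      simp only [mul_ite, mul_one, mul_zero]
      rw [Finset.sum_ite_eq' (smallSets d s) T r.β]
      rcases hT with hT | hT
      · subst hT
        have hnot : (∅ : Finset (Fin d)) ∉ smallSets d s := by
          simp [smallSets]
        simp [hnot]
      · have hne : T ≠ ∅ := by
          intro hE
          rw [hE] at hT
          simp [smallSets] at hT
        have hne' : (∅ : Finset (Fin d)) ≠ T := fun hE => hne hE.symm
        simp [hne, hne', hT]
    -- integrability of h·Φ and f·Φ
    have hVpos : (0:ℝ) ≤ V := le_of_lt hV
    have hhΦint : Integrable (fun z => h z * Φ z) (volume.restrict cube) := by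
      refine Integrable.mono' (integrable_const (V * 6 ^ d))
        ((hhmeas.mul hΦcont.stronglyMeasurable).aestronglyMeasurable) ?_
      filter_upwards [ae_restrict_mem hcubem] with z hz
      rw [Real.norm_eq_abs, abs_mul]
      exact mul_le_mul (by rw [abs_of_nonneg (hhnonneg z)]; exact hhle z hz)
        (hΦbd z hz) (abs_nonneg _) hVpos
    have hfΦint : Integrable (fun z => r.toFun s z * Φ z) (volume.restrict cube) := by
      refine Integrable.mono' (integrable_const ((B + V) * 6 ^ d))
        ((hfmeas.mul hΦcont.stronglyMeasurable).aestronglyMeasurable) ?_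
      filter_upwards [ae_restrict_mem hcubem] with z hz
      rw [Real.norm_eq_abs, abs_mul]
      exact mul_le_mul (hfbd z hz) (hΦbd z hz) (abs_nonneg _) hf2nonneg
    have hpolyΦint : Integrable (fun z => poly z * Φ z) (volume.restrict cube) :=
      ContinuousOn.integrableOn_compact' hcubec hcubem
        (hpolycont.mul hΦcont).continuousOn
    -- decomposition of the integral
    have hdecomp : (∫ z in cube, poly z * Φ z)
        = (∫ z in cube, r.toFun s z * Φ z) + (∫ z in cube, h z * Φ z) := by
      have : ∀ z, poly z * Φ z = r.toFun s z * Φ z + h z * Φ z := by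
        intro z; rw [hfz]; ring
      simp_rw [this]
      rw [integral_add hfΦint hhΦint]
    -- bounds on the two integrals
    have hbd1 : |∫ z in cube, r.toFun s z * Φ z| ≤ 6 ^ d * t := by
      have habs := norm_integral_le_integral_norm
        (μ := volume.restrict cube) (fun z => r.toFun s z * Φ z)
      simp only [Real.norm_eq_abs] at habs
      refine le_trans habs ?_
      have : (∫ z in cube, |r.toFun s z * Φ z|)
          ≤ ∫ z in cube, 6 ^ d * |r.toFun s z| := by
        refine integral_mono_ae hfΦint.abs (hfint.abs.const_mul _) ?_
        filter_upwards [ae_restrict_mem hcubem] with z hz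
        rw [abs_mul, mul_comm]
        exact mul_le_mul_of_nonneg_right (hΦbd z hz) (abs_nonneg _)
      refine le_trans this ?_
      rw [integral_const_mul]
      exact mul_le_mul_of_nonneg_left hfL1 (by positivity)
    have hbd2 : |∫ z in cube, h z * Φ z| ≤ 6 ^ d * V := by
      have habs := norm_integral_le_integral_norm
        (μ := volume.restrict cube) (fun z => h z * Φ z)
      simp only [Real.norm_eq_abs] at habs
      refine le_trans habs ?_
      have h1 : (∫ z in cube, |h z * Φ z|) ≤ ∫ z in cube, (6:ℝ) ^ d * V := by
        refine integral_mono_ae hhΦint.abs (integrable_const _) ?_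
        filter_upwards [ae_restrict_mem hcubem] with z hz
        rw [abs_mul]
        calc |h z| * |Φ z| ≤ V * 6 ^ d :=
            mul_le_mul (by rw [abs_of_nonneg (hhnonneg z)]; exact hhle z hz)
              (hΦbd z hz) (abs_nonneg _) hVpos
          _ = 6 ^ d * V := by ring
      refine le_trans h1 ?_
      rw [integral_const]
      have hμ : ((volume.restrict cube) Set.univ).toReal = 1 := by
        rw [Measure.restrict_apply_univ, hvol]; simp
      rw [measureReal_def, hμ, one_smul]
    calc |(if T = ∅ then r.β0 else r.β T)|
        = |(∫ z in cube, r.toFun s z * Φ z) + (∫ z in cube, h z * Φ z)| := by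
          rw [← hdecomp, hpolyΦ]
      _ ≤ |∫ z in cube, r.toFun s z * Φ z| + |∫ z in cube, h z * Φ z| := abs_add_le _ _
      _ ≤ 6 ^ d * t + 6 ^ d * V := add_le_add hbd1 hbd2
      _ = 6 ^ d * (V + t) := by ring
  constructor
  · have := main ∅ (Or.inl rfl)
    simpa using this
  · intro T hT1 hTs
    have hTmem : T ∈ smallSets d s := by
      simp only [smallSets, Finset.mem_filter, Finset.mem_univ, true_and]
      exact ⟨hT1, hTs⟩
    have hne : T ≠ ∅ := by
      intro hE; rw [hE] at hT1; simp at hT1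
    have := main T (Or.inr hTmem)
    rwa [if_neg hne] at this

end
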